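/- There exists a constant C>0, independent of λ, such that for every λ∈𝒥∖({0}∪Σ4∪Σ5) there are infinitely many m∈ℕ with |R^{∘m}(λ)|>C and |R^{∘m}(λ)−4|>C. -/

import Mathlib

noncomputable section

namespace SGpaper

/-- The polynomial `R(λ) = λ(5-λ)` of spectral decimation. -/
def R : ℂ → ℂ := fun z => z * (5 - z)

/-- The Julia set of `R`: points with bounded forward orbit. -/
def Julia : Set ℂ := {z | Bornology.IsBounded (Set.range fun n => R^[n] z)}

/-- `Σ₅ = ⋃_m R^{-m}{5}`. -/
def Sigma5 : Set ℂ := ⋃ m : ℕ, R^[m] ⁻¹' {5}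

/-- `Σ₄ = ⋃_m R^{-m}{4}`. -/
def Sigma4 : Set ℂ := ⋃ m : ℕ, R^[m] ⁻¹' {4}

/-- A positive quantity that grows by a factor `r > 1` as long as it stays `≤ c`
must escape above `c`, and there is a first escape time. -/
lemma escape_lemma {f : ℕ → ℝ} {c r : ℝ} (_hc : 0 < c) (hr : 1 < r)
    (hpos : 0 < f 0) (hf0 : f 0 ≤ c)
    (hstep : ∀ j, f j ≤ c → r * f j ≤ f (j + 1)) :
    ∃ j, 0 < j ∧ f (j - 1) ≤ c ∧ c < f j := by
  have hesc : ∃ j, c < f j := by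
    by_contra h
    push_neg at h
    have hgrow : ∀ j, r ^ j * f 0 ≤ f j := by
      intro j
      induction j with
      | zero => simp
      | succ j ih =>
        have h1 := hstep j (h j)
        calc r ^ (j + 1) * f 0 = r * (r ^ j * f 0) := by ring
        _ ≤ r * f j := by
            have : (0:ℝ) ≤ r := le_of_lt (lt_trans one_pos hr)
            nlinarith
        _ ≤ f (j + 1) := h1
    obtain ⟨n, hn⟩ := pow_unbounded_of_one_lt (c / f 0) hr
    have : c / f 0 * f 0 < r ^ n * f 0 := by nlinarith
    rw [div_mul_cancel₀ c (ne_of_gt hpos)] at this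
    exact absurd (lt_of_lt_of_le this (hgrow n)) (not_lt.2 (h n))
  classical
  refine ⟨Nat.find hesc, ?_, ?_, Nat.find_spec hesc⟩
  · refine Nat.pos_of_ne_zero fun h0 => ?_
    have := Nat.find_spec hesc
    rw [h0] at this
    exact absurd this (not_lt.2 hf0)
  · have hlt : Nat.find hesc - 1 < Nat.find hesc := by
      have : Nat.find hesc ≠ 0 := by
        intro h0
        have := Nat.find_spec hesc
        rw [h0] at this
        exact absurd this (not_lt.2 hf0)
      omega
    exact not_lt.1 (Nat.find_min hesc hlt)

/-- **Statement 12.** There is a constant `C > 0`, independent of `λ`, such that for every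
`λ ∈ 𝒥 \ ({0} ∪ Σ₄ ∪ Σ₅)` there are infinitely many `m` with `|R^{∘m}(λ)| > C` and
`|R^{∘m}(λ) - 4| > C`. -/
theorem orbit_infinitely_often_away_from_zero_four :
    ∃ C : ℝ, 0 < C ∧ ∀ lam ∈ Julia \ ({0} ∪ Sigma4 ∪ Sigma5),
      {m : ℕ | C < ‖R^[m] lam‖ ∧ C < ‖R^[m] lam - 4‖}.Infinite := by
  refine ⟨1/10, by norm_num, ?_⟩
  intro lam hlam
  obtain ⟨_, hnot⟩ := hlam
  simp only [Set.mem_union, Set.mem_singleton_iff, Sigma4, Sigma5, Set.mem_iUnion,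
    Set.mem_preimage, not_or, not_exists] at hnot
  obtain ⟨⟨hne0, hne4⟩, hne5⟩ := hnot
  -- the orbit never hits 4 or 5
  have h4 : ∀ m, R^[m] lam ≠ 4 := hne4
  have h5 : ∀ m, R^[m] lam ≠ 5 := hne5
  -- the orbit never hits 0
  have h0 : ∀ m, R^[m] lam ≠ 0 := by
    intro m
    induction m with
    | zero => simpa using hne0
    | succ m ih =>
      rw [Function.iterate_succ_apply']
      intro h
      have : R^[m] lam * (5 - R^[m] lam) = 0 := h
      rcases mul_eq_zero.1 this with h1 | h1
      · exact ih h1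
      · exact h5 m (by linear_combination -h1)
  -- abbreviations
  set z : ℕ → ℂ := fun m => R^[m] lam with hz
  -- basic norm facts
  have hRabs : ∀ w : ℂ, ‖R w‖ = ‖w‖ * ‖5 - w‖ := by
    intro w; simp [R, map_mul]
  have hRsub4 : ∀ w : ℂ, ‖R w - 4‖ = ‖w - 4‖ * ‖w - 1‖ := by
    intro w
    have : R w - 4 = -((w - 4) * (w - 1)) := by simp only [R]; ring
    rw [this, norm_neg, norm_mul]
  have hzsucc : ∀ m, z (m + 1) = R (z m) := by
    intro m; simp only [hz, Function.iterate_succ_apply']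
  -- main claim: for every N there is m ≥ N in the set
  have main : ∀ N : ℕ, ∃ m, N ≤ m ∧
      1/10 < ‖z m‖ ∧ 1/10 < ‖z m - 4‖ := by
    intro N
    by_cases hA : 1/10 < ‖z N‖ ∧ 1/10 < ‖z N - 4‖
    · exact ⟨N, le_refl N, hA⟩
    · rw [not_and_or, not_lt, not_lt] at hA
      rcases hA with hA | hA
      · -- near 0 : escape using factor 49/10
        have hstep : ∀ j, ‖z (N + j)‖ ≤ 1/10 →
            (49/10) * ‖z (N + j)‖ ≤ ‖z (N + j + 1)‖ := by
          intro j hj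
          rw [hzsucc, hRabs]
          have h1 : (5:ℝ) - ‖z (N + j)‖ ≤ ‖5 - z (N + j)‖ := by
            have := norm_sub_norm_le (5:ℂ) (z (N + j))
            simpa [Complex.norm_ofNat] using this
          have hpos : 0 ≤ ‖z (N + j)‖ := norm_nonneg _
          nlinarith
        have hpos0 : 0 < ‖z N‖ := by
          simpa [norm_pos_iff] using h0 N
        obtain ⟨j, hj0, hjprev, hjesc⟩ :=
          escape_lemma (f := fun j => ‖z (N + j)‖) (c := 1/10) (r := 49/10)
            (by norm_num) (by norm_num) hpos0 hA hstep
        refine ⟨N + j, Nat.le_add_right N j, hjesc, ?_⟩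
        -- at escape time, |z| ≤ 51/100, so far from 4
        have hj1 : N + j = (N + (j - 1)) + 1 := by omega
        have hupper : ‖z (N + j)‖ ≤ 51/100 := by
          rw [hj1, hzsucc, hRabs]
          have h1 : ‖5 - z (N + (j-1))‖ ≤ 5 + ‖z (N + (j-1))‖ := by
            have := norm_sub_le (5:ℂ) (z (N + (j-1)))
            simpa [Complex.norm_ofNat] using this
          have hpos : 0 ≤ ‖z (N + (j-1))‖ := norm_nonneg _
          nlinarith
        have h2 : (4:ℝ) - ‖z (N + j)‖ ≤ ‖z (N + j) - 4‖ := by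
          have hle := norm_sub_norm_le (4:ℂ) (z (N + j))
          have hrev : ‖(4:ℂ) - z (N + j)‖ = ‖z (N + j) - 4‖ := norm_sub_rev _ _
          have h4' : ‖(4:ℂ)‖ = 4 := by norm_num
          linarith
        linarith
      · -- near 4 : escape using factor 29/10
        have hstep : ∀ j, ‖z (N + j) - 4‖ ≤ 1/10 →
            (29/10) * ‖z (N + j) - 4‖ ≤ ‖z (N + j + 1) - 4‖ := by
          intro j hj
          rw [hzsucc, hRsub4]
          have h1 : (3:ℝ) - ‖z (N + j) - 4‖ ≤ ‖z (N + j) - 1‖ := by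
            have hle := norm_sub_norm_le (3:ℂ) (4 - z (N + j))
            have heq2 : (3:ℂ) - (4 - z (N + j)) = z (N + j) - 1 := by ring
            rw [heq2] at hle
            have hrev : ‖(4:ℂ) - z (N + j)‖ = ‖z (N + j) - 4‖ := norm_sub_rev _ _
            have h3 : ‖(3:ℂ)‖ = 3 := by norm_num
            linarith
          have hpos : 0 ≤ ‖z (N + j) - 4‖ := norm_nonneg _
          nlinarith
        have hpos0 : 0 < ‖z N - 4‖ := by
          rw [norm_pos_iff]
          exact sub_ne_zero.2 (h4 N)
        obtain ⟨j, hj0, hjprev, hjesc⟩ :=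
          escape_lemma (f := fun j => ‖z (N + j) - 4‖) (c := 1/10) (r := 29/10)
            (by norm_num) (by norm_num) hpos0 hA hstep
        refine ⟨N + j, Nat.le_add_right N j, ?_, hjesc⟩
        -- at escape time, |z - 4| ≤ 31/100, so far from 0
        have hj1 : N + j = (N + (j - 1)) + 1 := by omega
        have hupper : ‖z (N + j) - 4‖ ≤ 31/100 := by
          rw [hj1, hzsucc, hRsub4]
          have h1 : ‖z (N + (j-1)) - 1‖ ≤ ‖z (N + (j-1)) - 4‖ + 3 := by
            have heq : z (N + (j-1)) - 1 = (z (N + (j-1)) - 4) + 3 := by ring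
            rw [heq]
            have := norm_add_le (z (N + (j-1)) - 4) (3:ℂ)
            simpa [Complex.norm_ofNat] using this
          have hpos : 0 ≤ ‖z (N + (j-1)) - 4‖ := norm_nonneg _
          nlinarith
        have h2 : (4:ℝ) - ‖z (N + j) - 4‖ ≤ ‖z (N + j)‖ := by
          have hle := norm_sub_norm_le (4:ℂ) (4 - z (N + j))
          have heq2 : (4:ℂ) - (4 - z (N + j)) = z (N + j) := by ring
          rw [heq2] at hle
          have hrev : ‖(4:ℂ) - z (N + j)‖ = ‖z (N + j) - 4‖ := norm_sub_rev _ _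
          have h4' : ‖(4:ℂ)‖ = 4 := by norm_num
          linarith
        linarith
  -- conclude infiniteness
  intro hfin
  obtain ⟨b, hb⟩ := hfin.bddAbove
  obtain ⟨m, hm, hP⟩ := main (b + 1)
  have := hb (by exact hP : m ∈ _)
  omega

end SGpaper
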